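/- Fix a real number λ ≠ 0. For every integer n ≥ 0 and every real x, the Jindalrae polynomial satisfies J_{n,λ}(x) = Σ_{m=0}^{n} B_{m,λ}(x) S_{2,λ}(n,m). -/

import Mathlib

open Finset

/-- The degenerate falling factorial `(x)_{n,λ} = x(x−λ)⋯(x−(n−1)λ)`;
for `lam = 1` it is the ordinary falling factorial `(x)_n`. -/
noncomputable def dff (lam : ℝ) (n : ℕ) (x : ℝ) : ℝ :=
  ∏ i ∈ Finset.range n, (x - i * lam)

/-- The degenerate exponential `e_λ^x(t) = Σ_{n≥0} (x)_{n,λ} t^n/n!`. -/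
noncomputable def degExp (lam x : ℝ) : PowerSeries ℝ :=
  PowerSeries.mk fun n => dff lam n x / n.factorial

/-- The degenerate logarithm `log_λ(1+t) = Σ_{n≥1} λ^{n−1}(1)_{n,1/λ} t^n/n!`. -/
noncomputable def degLog (lam : ℝ) : PowerSeries ℝ :=
  PowerSeries.mk fun n =>
    if n = 0 then 0 else lam ^ (n - 1) * dff (1 / lam) n 1 / n.factorial

/-- Composition `f(g(t))` of formal power series (valid definition of composition
when `g` has zero constant term, as in all uses below). -/
noncomputable def pscomp (f g : PowerSeries ℝ) : PowerSeries ℝ :=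
  PowerSeries.mk fun n =>
    ∑ k ∈ Finset.range (n + 1), (PowerSeries.coeff k f) * (PowerSeries.coeff n (g ^ k))

lemma dff_zero (lam x : ℝ) : dff lam 0 x = 1 := by simp [dff]

lemma dff_succ (lam : ℝ) (n : ℕ) (x : ℝ) :
    dff lam (n+1) x = dff lam n x * (x - n * lam) := by
  simp [dff, Finset.prod_range_succ]

lemma dff_vandermonde (lam x y : ℝ) (n : ℕ) :
    dff lam n (x + y) =
      ∑ k ∈ range (n+1), (n.choose k : ℝ) * dff lam k x * dff lam (n-k) y := by
  induction n with
  | zero => simp [dff_zero]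
  | succ n ih =>
    have key : ∀ k ∈ range (n+1),
        (n.choose k : ℝ) * dff lam k x * dff lam (n-k) y * (x + y - n * lam)
        = (n.choose k : ℝ) * (dff lam (k+1) x * dff lam (n-k) y)
          + (n.choose k : ℝ) * (dff lam k x * dff lam (n-k+1) y) := by
      intro k hk
      rw [mem_range] at hk
      have hk' : k ≤ n := Nat.lt_succ_iff.mp hk
      have hcast : ((n - k : ℕ) : ℝ) = (n : ℝ) - k := by
        push_cast [Nat.cast_sub hk']; ring
      rw [dff_succ, dff_succ, hcast]
      ring
    rw [dff_succ, ih, Finset.sum_mul]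
    rw [Finset.sum_congr rfl key, Finset.sum_add_distrib]
    -- t k = dff lam k x * dff lam (n+1-k) y
    have h1 : ∀ k ∈ range (n+1), (n.choose k : ℝ) * (dff lam (k+1) x * dff lam (n-k) y)
        = (n.choose k : ℝ) * (dff lam (k+1) x * dff lam (n+1-(k+1)) y) := by
      intro k hk; rw [mem_range] at hk
      congr 3
      omega
    have h2 : ∀ k ∈ range (n+1), (n.choose k : ℝ) * (dff lam k x * dff lam (n-k+1) y)
        = (n.choose k : ℝ) * (dff lam k x * dff lam (n+1-k) y) := by
      intro k hk; rw [mem_range] at hk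
      congr 3
      omega
    rw [Finset.sum_congr rfl h1, Finset.sum_congr rfl h2]
    set t : ℕ → ℝ := fun k => dff lam k x * dff lam (n+1-k) y with ht
    show (∑ k ∈ range (n+1), (n.choose k : ℝ) * t (k+1))
        + (∑ k ∈ range (n+1), (n.choose k : ℝ) * t k)
        = ∑ k ∈ range (n+2), ((n+1).choose k : ℝ) * dff lam k x * dff lam (n+1-k) y
    have : ∑ k ∈ range (n+2), ((n+1).choose k : ℝ) * dff lam k x * dff lam (n+1-k) y
        = ∑ k ∈ range (n+2), ((n+1).choose k : ℝ) * t k := by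
      apply Finset.sum_congr rfl; intro k _; rw [ht]; ring
    rw [this, Finset.sum_range_succ' (fun k => ((n+1).choose k : ℝ) * t k)]
    simp only [Nat.choose_succ_succ, Nat.cast_add, add_mul, Nat.choose_zero_right, Nat.cast_one,
      one_mul, Finset.sum_add_distrib]
    have h3 : ∑ k ∈ range (n+1), (n.choose (k+1) : ℝ) * t (k+1)
        = ∑ k ∈ range (n+1), (n.choose k : ℝ) * t k - t 0 := by
      rw [Finset.sum_range_succ' (fun k => (n.choose k : ℝ) * t k),
        Finset.sum_range_succ]
      simp
    rw [h3]
    ring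

lemma coeff_degExp (lam x : ℝ) (n : ℕ) :
    PowerSeries.coeff n (degExp lam x) = dff lam n x / n.factorial := by
  simp [degExp]

lemma degExp_mul (lam x y : ℝ) : degExp lam x * degExp lam y = degExp lam (x + y) := by
  ext n
  rw [PowerSeries.coeff_mul, Finset.Nat.sum_antidiagonal_eq_sum_range_succ_mk,
    coeff_degExp, dff_vandermonde, Finset.sum_div]
  apply Finset.sum_congr rfl
  intro k hk
  rw [mem_range] at hk
  have hk' : k ≤ n := Nat.lt_succ_iff.mp hk
  rw [coeff_degExp, coeff_degExp]
  have hfac : (n.choose k : ℝ) = (n.factorial : ℝ) / (k.factorial * (n-k).factorial) := by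
    rw [eq_div_iff (by positivity)]
    rw [← mul_assoc, ← Nat.cast_mul, ← Nat.cast_mul,
      Nat.choose_mul_factorial_mul_factorial hk']
  rw [hfac]
  have h1 : (n.factorial : ℝ) ≠ 0 := by positivity
  have h2 : (k.factorial : ℝ) ≠ 0 := by positivity
  have h3 : ((n-k).factorial : ℝ) ≠ 0 := by positivity
  field_simp

lemma dff_zero_x (lam : ℝ) (n : ℕ) (hn : n ≠ 0) : dff lam n 0 = 0 := by
  apply Finset.prod_eq_zero (i := 0) (by simpa using Nat.pos_of_ne_zero hn)
  simp

lemma degExp_zero (lam : ℝ) : degExp lam 0 = 1 := by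
  ext n
  rw [coeff_degExp, PowerSeries.coeff_one]
  rcases Nat.eq_zero_or_pos n with h | h
  · simp [h, dff_zero]
  · rw [dff_zero_x lam n (Nat.pos_iff_ne_zero.mp h)]
    simp [Nat.pos_iff_ne_zero.mp h]

lemma degExp_pow (lam : ℝ) (j : ℕ) : (degExp lam 1) ^ j = degExp lam (j : ℝ) := by
  induction j with
  | zero => simp [degExp_zero]
  | succ j ih =>
    rw [pow_succ, ih, degExp_mul]
    norm_num

lemma constCoeff_sub_one (lam : ℝ) :
    PowerSeries.constantCoeff (degExp lam 1 - 1) = 0 := by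
  have := coeff_degExp lam 1 0
  simp only [PowerSeries.coeff_zero_eq_constantCoeff] at this
  simp [this, dff_zero]

lemma coeff_pow_eq_zero {g : PowerSeries ℝ} (hg : PowerSeries.constantCoeff g = 0) :
    ∀ {k n : ℕ}, n < k → PowerSeries.coeff n (g ^ k) = 0 := by
  intro k
  induction k with
  | zero => omega
  | succ k ih =>
    intro n hn
    rw [pow_succ, PowerSeries.coeff_mul, Finset.Nat.sum_antidiagonal_eq_sum_range_succ_mk]
    apply Finset.sum_eq_zero
    intro i hi
    rw [mem_range] at hi
    rcases Nat.eq_zero_or_pos (n - i) with h | h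
    · rw [h, PowerSeries.coeff_zero_eq_constantCoeff, hg, mul_zero]
    · rw [ih (by omega), zero_mul]

lemma dff_one_nat (k j : ℕ) : dff 1 k (j : ℝ) = k.factorial * (j.choose k) := by
  induction k with
  | zero => simp [dff_zero]
  | succ k ih =>
    rw [dff_succ, ih]
    have h1 : (j.choose (k+1) : ℝ) * ((k:ℝ) + 1) = (j.choose k : ℝ) * ((j:ℝ) - k) := by
      rcases le_or_gt k j with h | h
      · calc (j.choose (k+1):ℝ) * ((k:ℝ)+1) = ((j.choose (k+1) * (k+1) : ℕ) : ℝ) := by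
              push_cast; ring
        _ = ((j.choose k * (j-k) : ℕ) : ℝ) := by rw [Nat.choose_succ_right_eq j k]
        _ = (j.choose k : ℝ) * ((j:ℝ)-k) := by push_cast [Nat.cast_sub h]; ring
      · rw [Nat.choose_eq_zero_of_lt h, Nat.choose_eq_zero_of_lt (by omega)]; simp
    rw [Nat.factorial_succ]
    push_cast
    linear_combination (-(k.factorial : ℝ)) * h1

lemma coeff_pscomp (f g : PowerSeries ℝ) (n : ℕ) :
    PowerSeries.coeff n (pscomp f g) =
      ∑ k ∈ range (n+1), (PowerSeries.coeff k f) * (PowerSeries.coeff n (g ^ k)) := by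
  simp [pscomp]

lemma coeff_aeval {g : PowerSeries ℝ} (hg : PowerSeries.constantCoeff g = 0)
    (p : Polynomial ℝ) (n : ℕ) :
    PowerSeries.coeff n (Polynomial.aeval g p) =
      ∑ k ∈ range (n+1), p.coeff k * PowerSeries.coeff n (g ^ k) := by
  rw [Polynomial.aeval_eq_sum_range, map_sum]
  have hterm : ∀ k, PowerSeries.coeff n (p.coeff k • g ^ k)
      = p.coeff k * PowerSeries.coeff n (g ^ k) := by
    intro k; rw [map_smul, smul_eq_mul]
  simp only [hterm]
  set N := max (p.natDegree + 1) (n + 1) with hN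
  rw [show ∑ k ∈ range (p.natDegree + 1), p.coeff k * PowerSeries.coeff n (g ^ k)
      = ∑ k ∈ range N, p.coeff k * PowerSeries.coeff n (g ^ k) from
    Finset.sum_subset (Finset.range_subset_range.2 (le_max_left _ _)) (by
      intro k _ hk
      rw [mem_range] at hk
      rw [p.coeff_eq_zero_of_natDegree_lt (by omega), zero_mul])]
  exact (Finset.sum_subset (Finset.range_subset_range.2 (le_max_right _ _)) (by
    intro k _ hk
    rw [mem_range] at hk
    rw [coeff_pow_eq_zero hg (by omega), mul_zero])).symm

lemma coeff_pscomp_trunc {g : PowerSeries ℝ} (hg : PowerSeries.constantCoeff g = 0)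
    (f : PowerSeries ℝ) {n N : ℕ} (h : n < N) :
    PowerSeries.coeff n (pscomp f g) =
      PowerSeries.coeff n (Polynomial.aeval g (f.trunc N)) := by
  rw [coeff_pscomp, coeff_aeval hg]
  apply Finset.sum_congr rfl
  intro k hk
  rw [mem_range] at hk
  rw [PowerSeries.coeff_trunc]
  rw [if_pos (by omega)]

lemma pscomp_mul {g : PowerSeries ℝ} (hg : PowerSeries.constantCoeff g = 0)
    (a b : PowerSeries ℝ) : pscomp (a * b) g = pscomp a g * pscomp b g := by
  ext n
  rw [coeff_pscomp_trunc hg (a*b) (Nat.lt_succ_self n)]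
  have htr : ∀ k ∈ range (n+1), ((a*b).trunc (n+1)).coeff k
      = ((a.trunc (n+1)) * (b.trunc (n+1))).coeff k := by
    intro k hk
    rw [mem_range] at hk
    rw [PowerSeries.coeff_trunc, if_pos hk, Polynomial.coeff_mul, PowerSeries.coeff_mul]
    apply Finset.sum_congr rfl
    intro p hp
    rw [Finset.HasAntidiagonal.mem_antidiagonal] at hp
    rw [PowerSeries.coeff_trunc, PowerSeries.coeff_trunc, if_pos (by omega), if_pos (by omega)]
  rw [coeff_aeval hg]
  rw [Finset.sum_congr rfl (fun k hk => by rw [htr k hk] :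
    ∀ k ∈ range (n+1), ((a*b).trunc (n+1)).coeff k * PowerSeries.coeff n (g^k)
      = ((a.trunc (n+1)) * (b.trunc (n+1))).coeff k * PowerSeries.coeff n (g^k))]
  rw [← coeff_aeval hg, map_mul]
  rw [PowerSeries.coeff_mul, PowerSeries.coeff_mul]
  apply Finset.sum_congr rfl
  intro p hp
  rw [Finset.HasAntidiagonal.mem_antidiagonal] at hp
  rw [← coeff_pscomp_trunc hg a (show p.1 < n+1 by omega),
    ← coeff_pscomp_trunc hg b (show p.2 < n+1 by omega)]

lemma pscomp_one_sum (g : PowerSeries ℝ) (n : ℕ) :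
    ∑ k ∈ range (n+1), (PowerSeries.coeff k (1 : PowerSeries ℝ))
      * (PowerSeries.coeff n (g ^ k)) = PowerSeries.coeff n (1 : PowerSeries ℝ) := by
  rw [Finset.sum_eq_single_of_mem 0 (by simp)]
  · simp
  · intro k _ hk
    rw [PowerSeries.coeff_one, if_neg hk, zero_mul]

lemma pscomp_one (g : PowerSeries ℝ) : pscomp 1 g = 1 := by
  ext n
  rw [coeff_pscomp, pscomp_one_sum]

lemma pscomp_pow {g : PowerSeries ℝ} (hg : PowerSeries.constantCoeff g = 0)
    (a : PowerSeries ℝ) (k : ℕ) : pscomp (a ^ k) g = (pscomp a g) ^ k := by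
  induction k with
  | zero => simp [pscomp_one]
  | succ k ih => rw [pow_succ, pow_succ, pscomp_mul hg, ih]

lemma pscomp_sub_one (e g : PowerSeries ℝ) :
    pscomp (e - 1) g = pscomp e g - 1 := by
  ext n
  rw [map_sub, coeff_pscomp, coeff_pscomp]
  rw [← pscomp_one_sum g n, ← Finset.sum_sub_distrib]
  apply Finset.sum_congr rfl
  intro k _
  rw [map_sub, sub_mul]

lemma pscomp_assoc (f : PowerSeries ℝ) {e g : PowerSeries ℝ}
    (he : PowerSeries.constantCoeff e = 0) (hg : PowerSeries.constantCoeff g = 0) :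
    pscomp f (pscomp e g) = pscomp (pscomp f e) g := by
  ext n
  rw [coeff_pscomp, coeff_pscomp]
  have h1 : ∀ k ∈ range (n+1), (PowerSeries.coeff k f) * PowerSeries.coeff n ((pscomp e g)^k)
      = ∑ m ∈ range (n+1), (PowerSeries.coeff k f) * (PowerSeries.coeff m (e^k)
          * PowerSeries.coeff n (g^m)) := by
    intro k _
    rw [← pscomp_pow hg, coeff_pscomp, Finset.mul_sum]
  rw [Finset.sum_congr rfl h1, Finset.sum_comm]
  apply Finset.sum_congr rfl
  intro m hm
  rw [mem_range] at hm
  rw [coeff_pscomp, Finset.sum_mul]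
  rw [show ∑ k ∈ range (m+1), (PowerSeries.coeff k f) * (PowerSeries.coeff m (e^k))
        * PowerSeries.coeff n (g^m)
      = ∑ k ∈ range (n+1), (PowerSeries.coeff k f) * (PowerSeries.coeff m (e^k))
        * PowerSeries.coeff n (g^m) from
    Finset.sum_subset (Finset.range_subset_range.2 (by omega)) (by
      intro k _ hk
      rw [mem_range] at hk
      rw [coeff_pow_eq_zero he (by omega), mul_zero, zero_mul])]
  apply Finset.sum_congr rfl
  intro k _
  ring

lemma unique_coeffs (n : ℕ) (c : ℕ → ℝ)
    (h : ∀ j : ℕ, ∑ k ∈ range (n+1), c k * dff 1 k (j:ℝ) = 0) :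
    ∀ m, m ≤ n → c m = 0 := by
  intro m
  induction m using Nat.strong_induction_on with
  | _ m ih =>
    intro hm
    have h0 := h m
    have hsplit : ∑ k ∈ range (n+1), c k * dff 1 k (m:ℝ)
        = ∑ k ∈ range (m+1), c k * dff 1 k (m:ℝ) :=
      (Finset.sum_subset (Finset.range_subset_range.2 (by omega)) (fun k _ hk => by
        rw [mem_range] at hk
        rw [dff_one_nat, Nat.choose_eq_zero_of_lt (by omega)]
        simp)).symm
    rw [hsplit, Finset.sum_range_succ] at h0
    have hz : ∑ k ∈ range m, c k * dff 1 k (m:ℝ) = 0 :=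
      Finset.sum_eq_zero (fun k hk => by
        rw [mem_range] at hk
        rw [ih k hk (by omega), zero_mul])
    rw [hz, zero_add, dff_one_nat, Nat.choose_self, Nat.cast_one, mul_one] at h0
    have hfac : (m.factorial : ℝ) ≠ 0 := by positivity
    exact (mul_eq_zero.mp h0).resolve_right hfac

lemma S2_eq (lam : ℝ) (S2 : ℕ → ℕ → ℝ)
    (hS2 : ∀ (n : ℕ) (x : ℝ), dff lam n x = ∑ k ∈ Finset.range (n + 1), S2 n k * dff 1 k x)
    (n m : ℕ) (hm : m ≤ n) :
    S2 n m = (n.factorial : ℝ) / m.factorial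
      * PowerSeries.coeff n ((degExp lam 1 - 1) ^ m) := by
  set g : PowerSeries ℝ := degExp lam 1 - 1 with hgdef
  have hg : PowerSeries.constantCoeff g = 0 := constCoeff_sub_one lam
  set c : ℕ → ℝ := fun k => PowerSeries.coeff n (g ^ k) with hc
  set T : ℕ → ℝ := fun k => (n.factorial : ℝ) / k.factorial * c k with hT
  have key : ∀ j : ℕ, ∑ k ∈ range (n+1), T k * dff 1 k (j:ℝ) = dff lam n (j:ℝ) := by
    intro j
    have hbin : dff lam n (j:ℝ) / n.factorial
        = ∑ k ∈ range (j+1), (j.choose k : ℝ) * c k := by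
      rw [← coeff_degExp lam (j:ℝ) n, ← degExp_pow lam j,
        show degExp lam 1 = g + 1 from by rw [hgdef]; ring, add_pow]
      rw [map_sum]
      apply Finset.sum_congr rfl
      intro k _
      rw [one_pow, mul_one, hc]
      have : (↑(j.choose k) : PowerSeries ℝ) = PowerSeries.C (j.choose k : ℝ) := by
        simp
      rw [this, PowerSeries.coeff_mul_C]
      ring
    have hfac : (n.factorial : ℝ) ≠ 0 := by positivity
    have hdff : dff lam n (j:ℝ) = ∑ k ∈ range (j+1), (n.factorial : ℝ) * ((j.choose k : ℝ) * c k) := by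
      rw [← Finset.mul_sum, ← hbin, mul_div_cancel₀ _ hfac]
    rw [hdff]
    set N := max n j + 1 with hNdef
    have hL : ∑ k ∈ range (n+1), T k * dff 1 k (j:ℝ)
        = ∑ k ∈ range N, T k * dff 1 k (j:ℝ) :=
      Finset.sum_subset (Finset.range_subset_range.2 (by omega)) (fun k _ hk => by
        rw [mem_range] at hk
        rw [hT]
        simp only
        rw [hc]
        simp only
        rw [coeff_pow_eq_zero hg (show n < k by omega), mul_zero, zero_mul])
    have hR : ∑ k ∈ range (j+1), (n.factorial : ℝ) * ((j.choose k : ℝ) * c k)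
        = ∑ k ∈ range N, (n.factorial : ℝ) * ((j.choose k : ℝ) * c k) :=
      Finset.sum_subset (Finset.range_subset_range.2 (by omega)) (fun k _ hk => by
        rw [mem_range] at hk
        rw [Nat.choose_eq_zero_of_lt (by omega)]
        simp)
    rw [hL, hR]
    apply Finset.sum_congr rfl
    intro k hk
    rw [dff_one_nat, hT]
    simp only
    have hkfac : (k.factorial : ℝ) ≠ 0 := by positivity
    field_simp
  have hzero : ∀ j : ℕ, ∑ k ∈ range (n+1), (S2 n k - T k) * dff 1 k (j:ℝ) = 0 := by
    intro j
    have hsplit : ∀ k ∈ range (n+1), (S2 n k - T k) * dff 1 k (j:ℝ)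
        = S2 n k * dff 1 k (j:ℝ) - T k * dff 1 k (j:ℝ) := fun k _ => by ring
    rw [Finset.sum_congr rfl hsplit, Finset.sum_sub_distrib, key j, ← hS2 n (j:ℝ), sub_self]
  have := unique_coeffs n (fun k => S2 n k - T k) hzero m hm
  have h2 : S2 n m = T m := by simpa [sub_eq_zero] using this
  rw [h2, hT]

theorem jindalrae_via_bell (lam : ℝ) (hlam : lam ≠ 0)
    (S2 : ℕ → ℕ → ℝ) (B J : ℕ → ℝ → ℝ)
    (hS2 : ∀ (n : ℕ) (x : ℝ), dff lam n x = ∑ k ∈ Finset.range (n + 1), S2 n k * dff 1 k x)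
    (hB : ∀ x : ℝ, pscomp (degExp lam x) (degExp lam 1 - 1) = PowerSeries.mk (fun n => B n x / n.factorial))
    (hJ : ∀ x : ℝ, pscomp (degExp lam x) (pscomp (degExp lam 1) (degExp lam 1 - 1) - 1) = PowerSeries.mk (fun n => J n x / n.factorial))
    : ∀ (n : ℕ) (x : ℝ), J n x = ∑ m ∈ Finset.range (n + 1), B m x * S2 n m := by
  intro n x
  have hg : PowerSeries.constantCoeff (degExp lam 1 - 1) = 0 := constCoeff_sub_one lam
  have hJ' := hJ x
  rw [← pscomp_sub_one (degExp lam 1) (degExp lam 1 - 1),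
    pscomp_assoc _ hg hg, hB x] at hJ'
  have hn := congrArg (PowerSeries.coeff n) hJ'
  rw [coeff_pscomp, PowerSeries.coeff_mk] at hn
  have hn' : ∑ m ∈ range (n+1), (B m x / m.factorial)
      * PowerSeries.coeff n ((degExp lam 1 - 1) ^ m) = J n x / n.factorial := by
    rw [← hn]
    apply Finset.sum_congr rfl
    intro m _
    rw [PowerSeries.coeff_mk]
  have hfac : (n.factorial : ℝ) ≠ 0 := by positivity
  have hJval : J n x = ∑ m ∈ range (n+1), (n.factorial : ℝ) * ((B m x / m.factorial)
      * PowerSeries.coeff n ((degExp lam 1 - 1) ^ m)) := by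
    rw [← Finset.mul_sum, hn', mul_div_cancel₀ _ hfac]
  rw [hJval]
  apply Finset.sum_congr rfl
  intro m hm
  rw [mem_range] at hm
  rw [S2_eq lam S2 hS2 n m (by omega)]
  ring
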